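/- Let φ be the F(z)-automorphism of F(z)[x,y] given by x ↦ x + c₁R(a'₂₁x + a'₂₂y), y ↦ y + c₂R(a'₂₁x + a'₂₂y), where a'₂₁, a'₂₂ ∈ F[z] are relatively prime, R ∈ F[z][t] is a one-variable polynomial, and c₁, c₂ ∈ F[z] satisfy c₁a'₂₁ + c₂a'₂₂ = 0. Then φ restricts to an F[z]-automorphism of F[z][x,y] and is tame over F[z]. -/

import Mathlib

open MvPolynomial

noncomputable section

variable (F : Type) [Field F]

/-- Elementary `F[z]`-automorphisms of `F[z][x,y]`. -/
def IsElementary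
    (φ : MvPolynomial (Fin 2) (Polynomial F) ≃ₐ[Polynomial F]
      MvPolynomial (Fin 2) (Polynomial F)) : Prop :=
  (∃ (α : F) (_ : α ≠ 0) (p : Polynomial (Polynomial F)),
      φ (X 0) = X 0 ∧
      φ (X 1) = C (Polynomial.C α) * X 1 + Polynomial.aeval (X 0) p) ∨
  (∃ (α : F) (_ : α ≠ 0) (p : Polynomial (Polynomial F)),
      φ (X 1) = X 1 ∧
      φ (X 0) = C (Polynomial.C α) * X 0 + Polynomial.aeval (X 1) p)

/-- Linear `F[z]`-automorphisms of `F[z][x,y]` with determinant in `F*`. -/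
def IsLinearAut
    (φ : MvPolynomial (Fin 2) (Polynomial F) ≃ₐ[Polynomial F]
      MvPolynomial (Fin 2) (Polynomial F)) : Prop :=
  ∃ a b c d e f : Polynomial F, (∃ u : F, u ≠ 0 ∧ a * d - b * c = Polynomial.C u) ∧
    φ (X 0) = C a * X 0 + C b * X 1 + C e ∧
    φ (X 1) = C c * X 0 + C d * X 1 + C f

/-- Tame `F[z]`-automorphisms. -/
def IsTame
    (φ : MvPolynomial (Fin 2) (Polynomial F) ≃ₐ[Polynomial F]
      MvPolynomial (Fin 2) (Polynomial F)) : Prop :=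
  φ ∈ Subgroup.closure {ψ | IsElementary F ψ ∨ IsLinearAut F ψ}



def mk2Equiv {A : Type} [CommRing A] (u v u' v' : MvPolynomial (Fin 2) A)
    (h0 : aeval ![u', v'] u = X 0) (h1 : aeval ![u', v'] v = X 1)
    (h0' : aeval ![u, v] u' = X 0) (h1' : aeval ![u, v] v' = X 1) :
    MvPolynomial (Fin 2) A ≃ₐ[A] MvPolynomial (Fin 2) A :=
  AlgEquiv.ofAlgHom (aeval ![u, v]) (aeval ![u', v'])
    (by apply MvPolynomial.algHom_ext; intro i
        fin_cases i <;>
          simp only [AlgHom.comp_apply, aeval_X, AlgHom.id_apply, Fin.zero_eta, Fin.mk_one,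
            Matrix.cons_val_zero, Matrix.cons_val_one, Matrix.head_cons] <;> assumption)
    (by apply MvPolynomial.algHom_ext; intro i
        fin_cases i <;>
          simp only [AlgHom.comp_apply, aeval_X, AlgHom.id_apply, Fin.zero_eta, Fin.mk_one,
            Matrix.cons_val_zero, Matrix.cons_val_one, Matrix.head_cons] <;> assumption)

lemma mk2Equiv_apply {A : Type} [CommRing A] (u v u' v' : MvPolynomial (Fin 2) A)
    (h0 : aeval ![u', v'] u = X 0) (h1 : aeval ![u', v'] v = X 1)
    (h0' : aeval ![u, v] u' = X 0) (h1' : aeval ![u, v] v' = X 1)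
    (p : MvPolynomial (Fin 2) A) :
    mk2Equiv u v u' v' h0 h1 h0' h1' p = aeval ![u, v] p := rfl

lemma mk2Equiv_symm_apply {A : Type} [CommRing A] (u v u' v' : MvPolynomial (Fin 2) A)
    (h0 : aeval ![u', v'] u = X 0) (h1 : aeval ![u', v'] v = X 1)
    (h0' : aeval ![u, v] u' = X 0) (h1' : aeval ![u, v] v' = X 1)
    (p : MvPolynomial (Fin 2) A) :
    (mk2Equiv u v u' v' h0 h1 h0' h1').symm p = aeval ![u', v'] p := rfl

set_option maxHeartbeats 2000000 in
/-- Let `φ` be the `F(z)`-automorphism of `F(z)[x,y]` given by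
`x ↦ x + c₁R(a'₂₁x + a'₂₂y)`, `y ↦ y + c₂R(a'₂₁x + a'₂₂y)` where
`a'₂₁, a'₂₂ ∈ F[z]` are coprime, `R ∈ F[z][t]` and `c₁a'₂₁ + c₂a'₂₂ = 0`.
Then `φ` restricts to an `F[z]`-automorphism of `F[z][x,y]` which is tame. -/
theorem shear_restricts_and_is_tame
    (a₂₁ a₂₂ c₁ c₂ : Polynomial F) (hcop : IsCoprime a₂₁ a₂₂)
    (hc : c₁ * a₂₁ + c₂ * a₂₂ = 0) (R : Polynomial (Polynomial F))
    (φ : MvPolynomial (Fin 2) (RatFunc F) ≃ₐ[RatFunc F]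
      MvPolynomial (Fin 2) (RatFunc F))
    (hx : φ (X 0) = X 0 + C (algebraMap (Polynomial F) (RatFunc F) c₁) *
        Polynomial.aeval
          (C (algebraMap (Polynomial F) (RatFunc F) a₂₁) * X 0 +
           C (algebraMap (Polynomial F) (RatFunc F) a₂₂) * X 1) R)
    (hy : φ (X 1) = X 1 + C (algebraMap (Polynomial F) (RatFunc F) c₂) *
        Polynomial.aeval
          (C (algebraMap (Polynomial F) (RatFunc F) a₂₁) * X 0 +
           C (algebraMap (Polynomial F) (RatFunc F) a₂₂) * X 1) R) :
    ∃ ψ : MvPolynomial (Fin 2) (Polynomial F) ≃ₐ[Polynomial F]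
        MvPolynomial (Fin 2) (Polynomial F),
      (∀ p : MvPolynomial (Fin 2) (Polynomial F),
        MvPolynomial.map (algebraMap (Polynomial F) (RatFunc F)) (ψ p)
          = φ (MvPolynomial.map (algebraMap (Polynomial F) (RatFunc F)) p)) ∧
      IsTame F ψ := by
  obtain ⟨r, s, hrs⟩ := hcop
  set t : Polynomial F := c₂ * r - c₁ * s with ht
  have ht1 : c₁ = -(a₂₂ * t) := by rw [ht]; linear_combination r * hc - c₁ * hrs
  have ht2 : c₂ = a₂₁ * t := by rw [ht]; linear_combination s * hc - c₂ * hrs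
  have hC : (C r * C a₂₁ + C s * C a₂₂ : MvPolynomial (Fin 2) (Polynomial F)) = 1 := by
    rw [← map_mul, ← map_mul, ← map_add, hrs, map_one]
  -- the linear automorphism L
  have key0 : aeval (![C r * X 0 + C (-a₂₂) * X 1, C s * X 0 + C a₂₁ * X 1] :
        Fin 2 → MvPolynomial (Fin 2) (Polynomial F))
      (C a₂₁ * X 0 + C a₂₂ * X 1) = X 0 := by
    simp only [map_add, map_mul, aeval_X, aeval_C, Matrix.cons_val_zero, Matrix.cons_val_one,
      Matrix.head_cons, algebraMap_eq, map_neg]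
    linear_combination (X 0 : MvPolynomial (Fin 2) (Polynomial F)) * hC
  have key1 : aeval (![C r * X 0 + C (-a₂₂) * X 1, C s * X 0 + C a₂₁ * X 1] :
        Fin 2 → MvPolynomial (Fin 2) (Polynomial F))
      (C (-s) * X 0 + C r * X 1) = X 1 := by
    simp only [map_add, map_mul, aeval_X, aeval_C, Matrix.cons_val_zero, Matrix.cons_val_one,
      Matrix.head_cons, algebraMap_eq, map_neg]
    linear_combination (X 1 : MvPolynomial (Fin 2) (Polynomial F)) * hC
  have key0' : aeval (![C a₂₁ * X 0 + C a₂₂ * X 1, C (-s) * X 0 + C r * X 1] :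
        Fin 2 → MvPolynomial (Fin 2) (Polynomial F))
      (C r * X 0 + C (-a₂₂) * X 1) = X 0 := by
    simp only [map_add, map_mul, aeval_X, aeval_C, Matrix.cons_val_zero, Matrix.cons_val_one,
      Matrix.head_cons, algebraMap_eq, map_neg]
    linear_combination (X 0 : MvPolynomial (Fin 2) (Polynomial F)) * hC
  have key1' : aeval (![C a₂₁ * X 0 + C a₂₂ * X 1, C (-s) * X 0 + C r * X 1] :
        Fin 2 → MvPolynomial (Fin 2) (Polynomial F))
      (C s * X 0 + C a₂₁ * X 1) = X 1 := by
    simp only [map_add, map_mul, aeval_X, aeval_C, Matrix.cons_val_zero, Matrix.cons_val_one,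
      Matrix.head_cons, algebraMap_eq, map_neg]
    linear_combination (X 1 : MvPolynomial (Fin 2) (Polynomial F)) * hC
  set L := mk2Equiv (A := Polynomial F) (C a₂₁ * X 0 + C a₂₂ * X 1) (C (-s) * X 0 + C r * X 1)
    (C r * X 0 + C (-a₂₂) * X 1) (C s * X 0 + C a₂₁ * X 1) key0 key1 key0' key1' with hLdef
  -- the elementary automorphism E
  have ekey0 : aeval (![X 0, X 1 - C t * Polynomial.aeval (X 0) R] :
        Fin 2 → MvPolynomial (Fin 2) (Polynomial F))
      (X 0 : MvPolynomial (Fin 2) (Polynomial F)) = X 0 := by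
    simp only [aeval_X, Matrix.cons_val_zero]
  have ekey1 : aeval (![X 0, X 1 - C t * Polynomial.aeval (X 0) R] :
        Fin 2 → MvPolynomial (Fin 2) (Polynomial F))
      (X 1 + C t * Polynomial.aeval (X 0) R) = X 1 := by
    simp only [map_add, map_mul, map_sub, aeval_X, aeval_C, Matrix.cons_val_zero,
      Matrix.cons_val_one, Matrix.head_cons, algebraMap_eq,
      ← Polynomial.aeval_algHom_apply]
    ring
  have ekey0' : aeval (![X 0, X 1 + C t * Polynomial.aeval (X 0) R] :
        Fin 2 → MvPolynomial (Fin 2) (Polynomial F))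
      (X 0 : MvPolynomial (Fin 2) (Polynomial F)) = X 0 := by
    simp only [aeval_X, Matrix.cons_val_zero]
  have ekey1' : aeval (![X 0, X 1 + C t * Polynomial.aeval (X 0) R] :
        Fin 2 → MvPolynomial (Fin 2) (Polynomial F))
      (X 1 - C t * Polynomial.aeval (X 0) R) = X 1 := by
    simp only [map_add, map_mul, map_sub, aeval_X, aeval_C, Matrix.cons_val_zero,
      Matrix.cons_val_one, Matrix.head_cons, algebraMap_eq,
      ← Polynomial.aeval_algHom_apply]
    ring
  set E := mk2Equiv (A := Polynomial F) (X 0) (X 1 + C t * Polynomial.aeval (X 0) R)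
    (X 0) (X 1 - C t * Polynomial.aeval (X 0) R) ekey0 ekey1 ekey0' ekey1' with hEdef
  refine ⟨L * E * L⁻¹, ?_, ?_⟩
  pick_goal 2
  · -- tameness
    have hLlin : IsLinearAut F L := by
      refine ⟨a₂₁, a₂₂, -s, r, 0, 0, ⟨1, one_ne_zero, by rw [Polynomial.C_1]; linear_combination hrs⟩, ?_, ?_⟩
      · rw [hLdef, mk2Equiv_apply]
        simp only [aeval_X, Matrix.cons_val_zero, map_zero]
        ring
      · rw [hLdef, mk2Equiv_apply]
        simp only [aeval_X, Matrix.cons_val_one, Matrix.head_cons, Matrix.cons_val_zero, map_zero]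
        ring
    have hEelem : IsElementary F E := by
      refine Or.inl ⟨1, one_ne_zero, Polynomial.C t * R, ?_, ?_⟩
      · rw [hEdef, mk2Equiv_apply]
        simp only [aeval_X, Matrix.cons_val_zero]
      · rw [hEdef, mk2Equiv_apply]
        simp only [aeval_X, Matrix.cons_val_one, Matrix.head_cons, Matrix.cons_val_zero]
        rw [map_mul, Polynomial.aeval_C, map_one, map_one, one_mul]
        rw [algebraMap_eq]
    exact Subgroup.mul_mem _ (Subgroup.mul_mem _
      (Subgroup.subset_closure (Or.inr hLlin))
      (Subgroup.subset_closure (Or.inl hEelem)))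
      (Subgroup.inv_mem _ (Subgroup.subset_closure (Or.inr hLlin)))
  have hc1C : (C c₁ : MvPolynomial (Fin 2) (Polynomial F)) = -(C a₂₂ * C t) := by
    rw [← map_mul, ← map_neg, ht1]
  have hc2C : (C c₂ : MvPolynomial (Fin 2) (Polynomial F)) = C a₂₁ * C t := by
    rw [← map_mul, ht2]
  have hψ0 : (L * E * L⁻¹) (X 0)
      = X 0 + C c₁ * Polynomial.aeval (C a₂₁ * X 0 + C a₂₂ * X 1) R := by
    show L (E ((L⁻¹ : _ ≃ₐ[Polynomial F] _) (X 0))) = _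
    rw [hLdef, hEdef]
    rw [show (mk2Equiv (A := Polynomial F) (C a₂₁ * X 0 + C a₂₂ * X 1) (C (-s) * X 0 + C r * X 1)
      (C r * X 0 + C (-a₂₂) * X 1) (C s * X 0 + C a₂₁ * X 1) key0 key1 key0' key1')⁻¹
      = (mk2Equiv (A := Polynomial F) (C a₂₁ * X 0 + C a₂₂ * X 1) (C (-s) * X 0 + C r * X 1)
      (C r * X 0 + C (-a₂₂) * X 1) (C s * X 0 + C a₂₁ * X 1) key0 key1 key0' key1').symm
      from rfl]
    rw [mk2Equiv_symm_apply, mk2Equiv_apply, mk2Equiv_apply]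
    simp only [map_add, map_mul, map_sub, aeval_X, aeval_C, Matrix.cons_val_zero,
      Matrix.cons_val_one, Matrix.head_cons, algebraMap_eq, map_neg,
      ← Polynomial.aeval_algHom_apply]
    linear_combination (X 0 : MvPolynomial (Fin 2) (Polynomial F)) * hC
      - Polynomial.aeval (C a₂₁ * X 0 + C a₂₂ * X 1 :
          MvPolynomial (Fin 2) (Polynomial F)) R * hc1C
  have hψ1 : (L * E * L⁻¹) (X 1)
      = X 1 + C c₂ * Polynomial.aeval (C a₂₁ * X 0 + C a₂₂ * X 1) R := by
    show L (E ((L⁻¹ : _ ≃ₐ[Polynomial F] _) (X 1))) = _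
    rw [hLdef, hEdef]
    rw [show (mk2Equiv (A := Polynomial F) (C a₂₁ * X 0 + C a₂₂ * X 1) (C (-s) * X 0 + C r * X 1)
      (C r * X 0 + C (-a₂₂) * X 1) (C s * X 0 + C a₂₁ * X 1) key0 key1 key0' key1')⁻¹
      = (mk2Equiv (A := Polynomial F) (C a₂₁ * X 0 + C a₂₂ * X 1) (C (-s) * X 0 + C r * X 1)
      (C r * X 0 + C (-a₂₂) * X 1) (C s * X 0 + C a₂₁ * X 1) key0 key1 key0' key1').symm
      from rfl]
    rw [mk2Equiv_symm_apply, mk2Equiv_apply, mk2Equiv_apply]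
    simp only [map_add, map_mul, map_sub, aeval_X, aeval_C, Matrix.cons_val_zero,
      Matrix.cons_val_one, Matrix.head_cons, algebraMap_eq, map_neg,
      ← Polynomial.aeval_algHom_apply]
    linear_combination (X 1 : MvPolynomial (Fin 2) (Polynomial F)) * hC
      - Polynomial.aeval (C a₂₁ * X 0 + C a₂₂ * X 1 :
          MvPolynomial (Fin 2) (Polynomial F)) R * hc2C
  -- the commuting property
  intro p
  have hmap : ∀ q : MvPolynomial (Fin 2) (Polynomial F),
      MvPolynomial.map (algebraMap (Polynomial F) (RatFunc F)) (Polynomial.aeval q R)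
        = Polynomial.aeval (MvPolynomial.map (algebraMap (Polynomial F) (RatFunc F)) q) R := by
    intro q
    exact (Polynomial.aeval_algHom_apply
      (MvPolynomial.mapAlgHom (σ := Fin 2) (Algebra.ofId (Polynomial F) (RatFunc F))) q R).symm
  have hhom : (MvPolynomial.map (algebraMap (Polynomial F) (RatFunc F))).comp
        ((L * E * L⁻¹).toAlgHom.toRingHom)
      = (φ.toAlgHom.toRingHom).comp
        (MvPolynomial.map (algebraMap (Polynomial F) (RatFunc F))) := by
    apply MvPolynomial.ringHom_ext
    · intro a
      have h1 : (L * E * L⁻¹) (C a) = C a := by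
        rw [← algebraMap_eq]; exact AlgEquiv.commutes _ a
      have h2 : φ (C (algebraMap (Polynomial F) (RatFunc F) a))
          = C (algebraMap (Polynomial F) (RatFunc F) a) := by
        rw [← algebraMap_eq]; exact AlgEquiv.commutes _ _
      simp only [RingHom.comp_apply, AlgHom.toRingHom_eq_coe, RingHom.coe_coe, AlgEquiv.toAlgHom_eq_coe, AlgEquiv.coe_algHom,
        AlgHom.coe_coe, MvPolynomial.map_C]
      rw [h1, MvPolynomial.map_C, h2]
    · intro i
      fin_cases i
      · simp only [RingHom.comp_apply, AlgHom.toRingHom_eq_coe, RingHom.coe_coe, AlgEquiv.toAlgHom_eq_coe, AlgEquiv.coe_algHom,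
          AlgHom.coe_coe, Fin.zero_eta, MvPolynomial.map_X]
        rw [hψ0, hx]
        simp only [map_add, map_mul, MvPolynomial.map_C, MvPolynomial.map_X, hmap]
      · simp only [RingHom.comp_apply, AlgHom.toRingHom_eq_coe, RingHom.coe_coe, AlgEquiv.toAlgHom_eq_coe, AlgEquiv.coe_algHom,
          AlgHom.coe_coe, Fin.mk_one, MvPolynomial.map_X]
        rw [hψ1, hy]
        simp only [map_add, map_mul, MvPolynomial.map_C, MvPolynomial.map_X, hmap]
  exact RingHom.congr_fun hhom p

end
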